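/- Let v : [-λ, λ] → ℝ be C² on (-λ,λ) and continuous on [-λ,λ], with v(±λ) = 0, v'(±λ) = 0 (as one-sided limits), and suppose there exists y ∈ (0,λ) such that v'' > 0 on (-λ,-y) ∪ (y,λ) and v'' < 0 on (-y,y). Then v(x) > 0 for all x ∈ (-λ, λ). -/

import Mathlib

theorem stmt5 (lam : ℝ) (hlam : 0 < lam) (v : ℝ → ℝ) (y : ℝ)
    (hy : y ∈ Set.Ioo 0 lam)
    (hcont : ContinuousOn v (Set.Icc (-lam) lam))
    (hC2 : ContDiffOn ℝ 2 v (Set.Ioo (-lam) lam))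
    (hv1 : v lam = 0) (hv2 : v (-lam) = 0)
    (hd1 : Filter.Tendsto (deriv v) (nhdsWithin lam (Set.Iio lam)) (nhds 0))
    (hd2 : Filter.Tendsto (deriv v) (nhdsWithin (-lam) (Set.Ioi (-lam))) (nhds 0))
    (hpos : ∀ x ∈ Set.Ioo (-lam) (-y) ∪ Set.Ioo y lam, 0 < deriv (deriv v) x)
    (hneg : ∀ x ∈ Set.Ioo (-y) y, deriv (deriv v) x < 0) :
    ∀ x ∈ Set.Ioo (-lam) lam, 0 < v x := by
  obtain ⟨hy0, hyl⟩ := hy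
  have hyneg : -lam < -y := by linarith
  have hdv2 : ContDiffOn ℝ 1 (deriv v) (Set.Ioo (-lam) lam) :=
    hC2.deriv_of_isOpen isOpen_Ioo (by norm_num)
  have hdvd : DifferentiableOn ℝ (deriv v) (Set.Ioo (-lam) lam) :=
    hdv2.differentiableOn one_ne_zero
  have hsubR : Set.Ioo y lam ⊆ Set.Ioo (-lam) lam := by
    intro z hz; exact ⟨by linarith [hz.1], hz.2⟩
  have hsubL : Set.Ioo (-lam) (-y) ⊆ Set.Ioo (-lam) lam := by
    intro z hz; exact ⟨hz.1, by linarith [hz.2]⟩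
  -- right side: deriv v strictly increasing on (y,lam)
  have hmonoR : StrictMonoOn (deriv v) (Set.Ioo y lam) := by
    apply strictMonoOn_of_deriv_pos (convex_Ioo y lam)
      ((hdvd.mono hsubR).continuousOn)
    intro x hx
    rw [interior_Ioo] at hx
    exact hpos x (Or.inr hx)
  have hleR : ∀ x ∈ Set.Ioo y lam, deriv v x ≤ 0 := by
    intro x hx
    refine ge_of_tendsto hd1 ?_
    filter_upwards [Ioo_mem_nhdsLT_of_mem (⟨hx.2, le_rfl⟩ : lam ∈ Set.Ioc x lam)]
      with z hz
    exact (hmonoR hx ⟨lt_trans hx.1 hz.1, hz.2⟩ hz.1).le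
  have hnegR : ∀ x ∈ Set.Ioo y lam, deriv v x < 0 := by
    intro x hx
    have hm : (x + lam) / 2 ∈ Set.Ioo y lam :=
      ⟨by linarith [hx.1, hx.2], by linarith [hx.2]⟩
    have h1 := hmonoR hx hm (by linarith [hx.2])
    linarith [hleR _ hm]
  have hanti : StrictAntiOn v (Set.Icc y lam) := by
    apply strictAntiOn_of_deriv_neg (convex_Icc y lam)
      (hcont.mono (Set.Icc_subset_Icc (by linarith) le_rfl))
    intro x hx
    rw [interior_Icc] at hx
    exact hnegR x hx
  have hposR : ∀ x ∈ Set.Ico y lam, 0 < v x := by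
    intro x hx
    have h := hanti ⟨hx.1, hx.2.le⟩ (Set.right_mem_Icc.2 (by linarith)) hx.2
    rwa [hv1] at h
  -- left side
  have hmonoL : StrictMonoOn (deriv v) (Set.Ioo (-lam) (-y)) := by
    apply strictMonoOn_of_deriv_pos (convex_Ioo _ _)
      ((hdvd.mono hsubL).continuousOn)
    intro x hx
    rw [interior_Ioo] at hx
    exact hpos x (Or.inl hx)
  have hgeL : ∀ x ∈ Set.Ioo (-lam) (-y), 0 ≤ deriv v x := by
    intro x hx
    refine le_of_tendsto hd2 ?_
    filter_upwards [Ioo_mem_nhdsGT_of_mem (⟨le_rfl, hx.1⟩ : -lam ∈ Set.Ico (-lam) x)]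
      with z hz
    exact (hmonoL ⟨hz.1, lt_trans hz.2 hx.2⟩ hx hz.2).le
  have hposL : ∀ x ∈ Set.Ioo (-lam) (-y), 0 < deriv v x := by
    intro x hx
    have hm : (-lam + x) / 2 ∈ Set.Ioo (-lam) (-y) :=
      ⟨by linarith [hx.1], by linarith [hx.1, hx.2]⟩
    have h1 := hmonoL hm hx (by linarith [hx.1])
    linarith [hgeL _ hm]
  have hmonoV : StrictMonoOn v (Set.Icc (-lam) (-y)) := by
    apply strictMonoOn_of_deriv_pos (convex_Icc _ _)
      (hcont.mono (Set.Icc_subset_Icc le_rfl (by linarith)))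
    intro x hx
    rw [interior_Icc] at hx
    exact hposL x hx
  have hposLv : ∀ x ∈ Set.Ioc (-lam) (-y), 0 < v x := by
    intro x hx
    have h := hmonoV (Set.left_mem_Icc.2 (by linarith)) ⟨hx.1.le, hx.2⟩ hx.1
    rwa [hv2] at h
  -- concavity in the middle
  have hconc : StrictConcaveOn ℝ (Set.Icc (-y) y) v := by
    apply strictConcaveOn_of_deriv2_neg (convex_Icc _ _)
      (hcont.mono (Set.Icc_subset_Icc (by linarith) (by linarith)))
    intro x hx
    rw [interior_Icc] at hx
    simpa using hneg x hx
  have vy : 0 < v y := hposR y ⟨le_rfl, hyl⟩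
  have vny : 0 < v (-y) := hposLv (-y) ⟨hyneg, le_rfl⟩
  intro x hx
  by_cases hcase : x ∈ Set.Icc (-y) y
  · set t : ℝ := (y - x) / (2 * y) with ht
    have h2y : (0:ℝ) < 2 * y := by linarith
    have ht0 : 0 ≤ t := div_nonneg (by linarith [hcase.2]) h2y.le
    have ht1 : t ≤ 1 := by
      rw [div_le_one h2y]; linarith [hcase.1]
    have key : t * (2 * y) = y - x := by
      rw [ht]; field_simp
    have hcomb : t • (-y) + (1 - t) • y = x := by
      simp only [smul_eq_mul]
      linear_combination -key
    have h : t • v (-y) + (1 - t) • v y ≤ v (t • (-y) + (1 - t) • y) :=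
      hconc.concaveOn.2 (Set.left_mem_Icc.2 (by linarith))
        (Set.right_mem_Icc.2 (by linarith)) ht0 (by linarith) (by ring)
    rw [hcomb] at h
    simp only [smul_eq_mul] at h
    nlinarith [h, mul_nonneg ht0 (sub_nonneg.2 (min_le_left (v (-y)) (v y))),
      mul_nonneg (sub_nonneg.2 ht1) (sub_nonneg.2 (min_le_right (v (-y)) (v y))),
      lt_min vny vy]
  · simp only [Set.mem_Icc, not_and_or, not_le] at hcase
    rcases hcase with h | h
    · exact hposLv x ⟨hx.1, h.le⟩
    · exact hposR x ⟨h.le, hx.2⟩
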